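/- Under the Kaluza-Klein hypotheses with Vielbein E^a_α = e^a_α, E^2_2 = √ε, E^2_α = √ε φ_α, E^a_2 = 0 and inverse Vielbein Ẽ^α_a = ẽ^α_a, Ẽ^2_2 = 1/√ε, Ẽ^2_a = −φ_ζ ẽ^ζ_a, Ẽ^α_2 = 0, the spin connection component [A_α]^a_2 := E^a_ν Ẽ^λ_2 Γ^ν_{αλ} − Ẽ^λ_2 ∂_α E^a_λ equals (√ε/2) e^a_δ h^{δζ} f_{αζ}, where f_{αζ} = ∂_α φ_ζ − ∂_ζ φ_α. -/

import Mathlib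

open Matrix

/-- Partial derivative in coordinate direction `μ` on ℝ³. -/
noncomputable def pd (μ : Fin 3) (F : (Fin 3 → ℝ) → ℝ) (x : Fin 3 → ℝ) : ℝ :=
  fderiv ℝ F x (Pi.single μ 1)

/-- The Kaluza-Klein metric `G` with `G_{αβ} = h_{αβ} + ε φ_α φ_β`,
`G_{α2} = G_{2α} = ε φ_α`, `G_{22} = ε`. -/
noncomputable def KK (ε : ℝ) (h : Matrix (Fin 2) (Fin 2) ℝ) (φ : Fin 2 → ℝ) :
    Matrix (Fin 3) (Fin 3) ℝ :=
  Matrix.of fun μ ν =>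
    if hμ : (μ : ℕ) < 2 then
      if hν : (ν : ℕ) < 2 then h ⟨(μ : ℕ), hμ⟩ ⟨(ν : ℕ), hν⟩ + ε * φ ⟨(μ : ℕ), hμ⟩ * φ ⟨(ν : ℕ), hν⟩
      else ε * φ ⟨(μ : ℕ), hμ⟩
    else if hν : (ν : ℕ) < 2 then ε * φ ⟨(ν : ℕ), hν⟩ else ε

/-- Christoffel symbols `Γ^λ_{μν} = (1/2) G^{λρ}(∂_ν G_{ρμ} + ∂_μ G_{ρν} − ∂_ρ G_{μν})`. -/
noncomputable def chris (G : (Fin 3 → ℝ) → Matrix (Fin 3) (Fin 3) ℝ)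
    (x : Fin 3 → ℝ) (l μ ν : Fin 3) : ℝ :=
  (1/2) * ∑ ρ, (G x)⁻¹ l ρ *
    (pd ν (fun y => G y ρ μ) x + pd μ (fun y => G y ρ ν) x - pd ρ (fun y => G y μ ν) x)

/-- Abelian field strength `f_{αβ} = ∂_α φ_β − ∂_β φ_α` (base indices). -/
noncomputable def fs (φf : (Fin 3 → ℝ) → Fin 2 → ℝ) (x : Fin 3 → ℝ) (α β : Fin 2) : ℝ :=
  pd α.castSucc (fun y => φf y β) x - pd β.castSucc (fun y => φf y α) x

/-- Christoffel symbols `γ^δ_{αβ}` of the base metric `h`. -/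
noncomputable def gam (hm : (Fin 3 → ℝ) → Matrix (Fin 2) (Fin 2) ℝ)
    (x : Fin 3 → ℝ) (δ α β : Fin 2) : ℝ :=
  (1/2) * ∑ ζ, (hm x)⁻¹ δ ζ *
    (pd β.castSucc (fun y => hm y ζ α) x + pd α.castSucc (fun y => hm y ζ β) x
      - pd ζ.castSucc (fun y => hm y α β) x)


/-- The Vielbein `E^A_μ` (row index A, column index μ):
`E^a_α = e^a_α`, `E^2_2 = √ε`, `E^2_α = √ε φ_α`, `E^a_2 = 0`. -/
noncomputable def Emat (ε : ℝ) (e : Matrix (Fin 2) (Fin 2) ℝ) (φ : Fin 2 → ℝ) :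
    Matrix (Fin 3) (Fin 3) ℝ :=
  !![e 0 0, e 0 1, 0;
     e 1 0, e 1 1, 0;
     Real.sqrt ε * φ 0, Real.sqrt ε * φ 1, Real.sqrt ε]

/-- The inverse Vielbein `Ẽ^μ_A` (row index μ, column index A):
`Ẽ^α_a = ẽ^α_a`, `Ẽ^2_2 = 1/√ε`, `Ẽ^2_a = −φ_ζ ẽ^ζ_a`, `Ẽ^α_2 = 0`. -/
noncomputable def Etmat (ε : ℝ) (e : Matrix (Fin 2) (Fin 2) ℝ) (φ : Fin 2 → ℝ) :
    Matrix (Fin 3) (Fin 3) ℝ :=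
  !![e⁻¹ 0 0, e⁻¹ 0 1, 0;
     e⁻¹ 1 0, e⁻¹ 1 1, 0;
     -(φ 0 * e⁻¹ 0 0 + φ 1 * e⁻¹ 1 0), -(φ 0 * e⁻¹ 0 1 + φ 1 * e⁻¹ 1 1),
       (Real.sqrt ε)⁻¹]

/-- The spin connection `[A_μ]^A_B = E^A_ν Ẽ^λ_B Γ^ν_{μλ} − Ẽ^λ_B ∂_μ E^A_λ`. -/
noncomputable def spinConn (ε : ℝ) (hm : (Fin 3 → ℝ) → Matrix (Fin 2) (Fin 2) ℝ)
    (φf : (Fin 3 → ℝ) → Fin 2 → ℝ) (em : (Fin 3 → ℝ) → Matrix (Fin 2) (Fin 2) ℝ)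
    (μ A B : Fin 3) (x : Fin 3 → ℝ) : ℝ :=
  (∑ ν, ∑ lam, Emat ε (em x) (φf x) A ν * Etmat ε (em x) (φf x) lam B *
      chris (fun y => KK ε (hm y) (φf y)) x ν μ lam)
    - ∑ lam, Etmat ε (em x) (φf x) lam B * pd μ (fun y => Emat ε (em y) (φf y) A lam) x


noncomputable def KKi (ε : ℝ) (h : Matrix (Fin 2) (Fin 2) ℝ) (φ : Fin 2 → ℝ) :
    Matrix (Fin 3) (Fin 3) ℝ :=
  Matrix.of fun μ ν =>
    if hμ : (μ : ℕ) < 2 then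
      if hν : (ν : ℕ) < 2 then h⁻¹ ⟨(μ : ℕ), hμ⟩ ⟨(ν : ℕ), hν⟩
      else -(∑ ζ, h⁻¹ ⟨(μ : ℕ), hμ⟩ ζ * φ ζ)
    else if hν : (ν : ℕ) < 2 then -(∑ ζ, φ ζ * h⁻¹ ζ ⟨(ν : ℕ), hν⟩)
    else ε⁻¹ + ∑ ζ, ∑ η, φ ζ * h⁻¹ ζ η * φ η

lemma KK_mul_KKi (ε : ℝ) (hε : ε ≠ 0) (h : Matrix (Fin 2) (Fin 2) ℝ)
    (hd : IsUnit h.det) (φ : Fin 2 → ℝ) : KK ε h φ * KKi ε h φ = 1 := by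
  have H : ∀ i j, h i 0 * h⁻¹ 0 j + h i 1 * h⁻¹ 1 j = (1 : Matrix (Fin 2) (Fin 2) ℝ) i j := by
    intro i j
    have := congrFun (congrFun (Matrix.mul_nonsing_inv h hd) i) j
    simpa [Matrix.mul_apply, Fin.sum_univ_two] using this
  have H00 : h 0 0 * h⁻¹ 0 0 + h 0 1 * h⁻¹ 1 0 = 1 := by simpa using H 0 0
  have H01 : h 0 0 * h⁻¹ 0 1 + h 0 1 * h⁻¹ 1 1 = 0 := by simpa using H 0 1
  have H10 : h 1 0 * h⁻¹ 0 0 + h 1 1 * h⁻¹ 1 0 = 0 := by simpa using H 1 0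
  have H11 : h 1 0 * h⁻¹ 0 1 + h 1 1 * h⁻¹ 1 1 = 1 := by simpa using H 1 1
  have hee : ε * ε⁻¹ = 1 := mul_inv_cancel₀ hε
  ext μ ν
  fin_cases μ <;> fin_cases ν <;>
    simp [KK, KKi, Matrix.mul_apply, Fin.sum_univ_three, Fin.sum_univ_two,
      Matrix.one_apply, Fin.ext_iff] <;>
    first
      | linear_combination H00
      | linear_combination H01
      | linear_combination H10
      | linear_combination H11
      | linear_combination (-(φ 0)) * H00 + (-(φ 1)) * H01 + φ 0 * hee
      | linear_combination (-(φ 0)) * H10 + (-(φ 1)) * H11 + φ 1 * hee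
      | linear_combination hee
      | ring

section entries
variable (ε : ℝ) (h : Matrix (Fin 2) (Fin 2) ℝ) (φ : Fin 2 → ℝ)

lemma KK_bb (β α : Fin 2) :
    KK ε h φ β.castSucc α.castSucc = h β α + ε * φ β * φ α := by
  simp [KK, β.is_lt, α.is_lt, β.is_le, α.is_le]

lemma KK_b2 (β : Fin 2) : KK ε h φ β.castSucc 2 = ε * φ β := by
  simp [KK, β.is_lt, β.is_le]

lemma KK_2b (α : Fin 2) : KK ε h φ 2 α.castSucc = ε * φ α := by
  simp [KK, α.is_lt, α.is_le]

lemma KK_22 : KK ε h φ 2 2 = ε := by simp [KK]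

lemma KKi_bb (β α : Fin 2) : KKi ε h φ β.castSucc α.castSucc = h⁻¹ β α := by
  simp [KKi, β.is_lt, α.is_lt, β.is_le, α.is_le]

lemma KKi_b2 (β : Fin 2) : KKi ε h φ β.castSucc 2 = -(∑ ζ, h⁻¹ β ζ * φ ζ) := by
  simp [KKi, β.is_lt, β.is_le]

end entries

lemma pd_dir2_zero (F : (Fin 3 → ℝ) → ℝ) (hF : Differentiable ℝ F)
    (hind : ∀ x t, F (Function.update x 2 t) = F x) (x : Fin 3 → ℝ) : pd 2 F x = 0 := by
  set v : Fin 3 → ℝ := Pi.single 2 1 with hv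
  have key : ∀ t : ℝ, F (x + t • v) = F x := by
    intro t
    have hx : x + t • v = Function.update x 2 (x 2 + t) := by
      funext i
      by_cases hi : i = 2 <;> simp [Function.update, hi, hv, Pi.single_apply]
    rw [hx, hind]
  have hl : HasDerivAt (fun t : ℝ => x + t • v) v 0 := by
    simpa using ((hasDerivAt_id (0:ℝ)).smul_const v).const_add x
  have h1 : HasDerivAt (fun t : ℝ => F (x + t • v)) (fderiv ℝ F x v) 0 := by
    have := (hF (x + (0:ℝ) • v)).hasFDerivAt.comp_hasDerivAt 0 hl
    simpa [Function.comp_def] using this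
  have h1' : HasDerivAt (fun _ : ℝ => F x) (fderiv ℝ F x v) 0 := by
    rwa [funext key] at h1
  have h2 : HasDerivAt (fun _ : ℝ => F x) 0 (0:ℝ) := hasDerivAt_const _ _
  simpa [pd, hv] using h1'.unique h2

lemma pd_const_mul (μ : Fin 3) (c : ℝ) (f : (Fin 3 → ℝ) → ℝ) (x : Fin 3 → ℝ)
    (hf : DifferentiableAt ℝ f x) :
    pd μ (fun y => c * f y) x = c * pd μ f x := by
  simp [pd, fderiv_const_mul hf]

lemma pd_const (μ : Fin 3) (c : ℝ) (x : Fin 3 → ℝ) : pd μ (fun _ => c) x = 0 := by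
  simp [pd]

lemma chris_b2 (ε : ℝ) (hε : ε ≠ 0)
    (hm : (Fin 3 → ℝ) → Matrix (Fin 2) (Fin 2) ℝ) (φf : (Fin 3 → ℝ) → Fin 2 → ℝ)
    (hsm : ∀ α β, ContDiff ℝ (⊤ : ℕ∞) fun x => hm x α β)
    (φsm : ∀ α, ContDiff ℝ (⊤ : ℕ∞) fun x => φf x α)
    (hinv : ∀ x, IsUnit (hm x).det)
    (hind : ∀ x t, hm (Function.update x 2 t) = hm x)
    (φind : ∀ x t, φf (Function.update x 2 t) = φf x)
    (x : Fin 3 → ℝ) (α β : Fin 2) :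
    chris (fun y => KK ε (hm y) (φf y)) x β.castSucc α.castSucc 2
      = ε/2 * ∑ ρ : Fin 2, (hm x)⁻¹ β ρ * fs φf x α ρ := by
  have dφ : ∀ ρ, Differentiable ℝ (fun y => φf y ρ) := fun ρ =>
    (φsm ρ).differentiable (by simp)
  have dh : ∀ ρ σ, Differentiable ℝ (fun y => hm y ρ σ) := fun ρ σ =>
    (hsm ρ σ).differentiable (by simp)
  have Ginv : (KK ε (hm x) (φf x))⁻¹ = KKi ε (hm x) (φf x) :=
    Matrix.inv_eq_right_inv (KK_mul_KKi ε hε (hm x) (hinv x) (φf x))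
  have pdφ2 : ∀ ρ, pd 2 (fun y => φf y ρ) x = 0 := fun ρ =>
    pd_dir2_zero _ (dφ ρ) (fun y t => congrFun (φind y t) ρ) x
  have A : ∀ ρ' : Fin 2, pd 2 (fun y => hm y ρ' α + ε * φf y ρ' * φf y α) x = 0 := by
    intro ρ'
    exact pd_dir2_zero _ ((dh ρ' α).add (((dφ ρ').const_mul ε).mul (dφ α)))
      (fun y t => by simp [hind, φind]) x
  have A2 : pd 2 (fun y => ε * φf y α) x = 0 := by
    rw [pd_const_mul _ _ _ _ ((dφ α) x), pdφ2, mul_zero]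
  have B : ∀ (μ : Fin 3) (ρ' : Fin 2), pd μ (fun y => ε * φf y ρ') x
      = ε * pd μ (fun y => φf y ρ') x := fun μ ρ' =>
    pd_const_mul _ _ _ _ ((dφ ρ') x)
  have h0 : (0 : Fin 3) = (0 : Fin 2).castSucc := rfl
  have h1 : (1 : Fin 3) = (1 : Fin 2).castSucc := rfl
  simp only [chris, Ginv, Fin.sum_univ_three, h0, h1, KK_bb, KK_b2, KK_2b, KK_22,
    KKi_bb, KKi_b2, A, A2, B, pd_const, pdφ2]
  simp only [fs, Fin.sum_univ_two]
  ring

/-- the spin connection component [A_α]^a_2 equals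
(√ε/2) e^a_δ h^{δζ} f_{αζ}. -/
theorem stmt_15
    (ε : ℝ) (hε : 0 < ε)
    (hm : (Fin 3 → ℝ) → Matrix (Fin 2) (Fin 2) ℝ) (φf : (Fin 3 → ℝ) → Fin 2 → ℝ)
    (hsm : ∀ α β, ContDiff ℝ (⊤ : ℕ∞) fun x => hm x α β)
    (φsm : ∀ α, ContDiff ℝ (⊤ : ℕ∞) fun x => φf x α)
    (hinv : ∀ x, IsUnit (hm x).det)
    (hind : ∀ x t, hm (Function.update x 2 t) = hm x)
    (φind : ∀ x t, φf (Function.update x 2 t) = φf x)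
    (em : (Fin 3 → ℝ) → Matrix (Fin 2) (Fin 2) ℝ)
    (esm : ∀ a α, ContDiff ℝ (⊤ : ℕ∞) fun x => em x a α)
    (einv : ∀ x, IsUnit (em x).det)
    (hZwei : ∀ x, (em x)ᵀ * em x = hm x) :
    ∀ (x : Fin 3 → ℝ) (α a : Fin 2),
      spinConn ε hm φf em α.castSucc a.castSucc 2 x =
        Real.sqrt ε / 2 * ∑ δ, ∑ ζ, em x a δ * (hm x)⁻¹ δ ζ * fs φf x α ζ := by
  intro x α a
  have hε' : ε ≠ 0 := ne_of_gt hε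
  have hsne : Real.sqrt ε ≠ 0 := ne_of_gt (Real.sqrt_pos.2 hε)
  have hss : Real.sqrt ε * Real.sqrt ε = ε := Real.mul_self_sqrt hε.le
  have h0 : (0 : Fin 3) = (0 : Fin 2).castSucc := rfl
  have h1 : (1 : Fin 3) = (1 : Fin 2).castSucc := rfl
  have C := fun β => chris_b2 ε hε' hm φf hsm φsm hinv hind φind x α β
  fin_cases a <;>
    [skip; skip] <;>
  · simp only [spinConn, Fin.sum_univ_three, Emat, Etmat, Matrix.cons_val_zero,
      Matrix.cons_val_one, Matrix.head_cons, Matrix.cons_val', Matrix.cons_val_fin_one,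
      Matrix.head_fin_const, Matrix.empty_val', Matrix.of_apply, Matrix.cons_val_two,
      Matrix.tail_cons, Fin.mk_zero, Fin.mk_one, Fin.castSucc_zero, Fin.castSucc_one,
      pd_const, Fin.sum_univ_two]
    rw [h0, h1]
    simp only [C, Fin.sum_univ_two]
    field_simp
    first
      | linear_combination (-1 * (em x 0 0 * ((hm x)⁻¹ 0 0 * fs φf x α 0
            + (hm x)⁻¹ 0 1 * fs φf x α 1)
          + em x 0 1 * ((hm x)⁻¹ 1 0 * fs φf x α 0
            + (hm x)⁻¹ 1 1 * fs φf x α 1))) * hss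
      | linear_combination (-1 * (em x 1 0 * ((hm x)⁻¹ 0 0 * fs φf x α 0
            + (hm x)⁻¹ 0 1 * fs φf x α 1)
          + em x 1 1 * ((hm x)⁻¹ 1 0 * fs φf x α 0
            + (hm x)⁻¹ 1 1 * fs φf x α 1))) * hss
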